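/- If 0 < h < 1/(27 r), then T_h is strictly increasing on the interval [(s 0)²/2, ∞); in particular deriv T_h α > 0 for every α ≥ (s 0)²/2. -/

import Mathlib

private lemma aux1' (c α : ℝ) (hne : α + c ≠ 0) :
    HasDerivAt (fun x : ℝ => x ^ 2 / (x + c) ^ 2) (2 * α * c / (α + c) ^ 3) α := by
  have h1 : HasDerivAt (fun x : ℝ => x ^ 2) (2 * α) α := by
    simpa using hasDerivAt_pow 2 α
  have h2 : HasDerivAt (fun x : ℝ => (x + c) ^ 2) (2 * (α + c)) α := by
    have := ((hasDerivAt_id α).add_const c).fun_pow 2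
    simpa using this
  have := h1.fun_div h2 (pow_ne_zero 2 hne)
  refine this.congr_deriv ?_
  field_simp
  ring

private lemma aux2' (k d α : ℝ) (hne : α + d ≠ 0) :
    HasDerivAt (fun x : ℝ => k / (x + d) ^ 2) (-(2 * k / (α + d) ^ 3)) α := by
  have h2 : HasDerivAt (fun x : ℝ => (x + d) ^ 2) (2 * (α + d)) α := by
    have := ((hasDerivAt_id α).add_const d).fun_pow 2
    simpa using this
  have := (hasDerivAt_const α k).fun_div h2 (pow_ne_zero 2 hne)
  refine this.congr_deriv ?_
  field_simp
  ring

private lemma aux3' (d c α : ℝ) (hd : 0 < d) (hdc : d ≤ c) (hca : c ≤ 2 * α) :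
    d ^ 2 * (α + c) ^ 3 ≤ c ^ 2 * (α + d) ^ 3 := by
  have hc : 0 < c := hd.trans_le hdc
  have hα : 0 < α := by linarith
  have hfac : c ^ 2 * (α + d) ^ 3 - d ^ 2 * (α + c) ^ 3
      = (c - d) * (α ^ 3 * (c + d) + 3 * α ^ 2 * c * d - c ^ 2 * d ^ 2) := by ring
  have h2 : 0 ≤ α ^ 3 * (c + d) + 3 * α ^ 2 * c * d - c ^ 2 * d ^ 2 := by
    nlinarith [mul_nonneg (mul_nonneg (mul_nonneg hc.le hd.le) hd.le) (by linarith : (0:ℝ) ≤ 2 * α - c),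
      mul_nonneg (mul_nonneg (mul_nonneg hα.le hc.le) hd.le) (by linarith : (0:ℝ) ≤ c - d),
      mul_nonneg (mul_nonneg (mul_nonneg hα.le hc.le) hd.le) (by linarith : (0:ℝ) ≤ 2 * α - c),
      mul_nonneg (mul_nonneg (sq_nonneg α) hd.le) (by linarith : (0:ℝ) ≤ 2 * α - c),
      mul_nonneg (mul_nonneg (mul_nonneg hα.le hα.le) hα.le) (by linarith : (0:ℝ) ≤ c - d)]
  nlinarith [mul_nonneg (sub_nonneg.2 hdc) h2]

/-- The PRO function `T_h(α) = f₁(α) + h·f₂(α)` for Tikhonov regularization. -/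
noncomputable def proT (r : ℕ) (hr : 0 < r) (s : Fin r → ℝ) (h : ℝ) (α : ℝ) : ℝ :=
  α ^ 2 / (α + (s ⟨0, hr⟩) ^ 2) ^ 2 + h * ∑ i, (s i) ^ 4 / (α + (s i) ^ 2) ^ 2

/-- If `0 < h < 1/(27 r)`, then `T_h` is strictly increasing on
`[(s 0)²/2, ∞)`; in particular `deriv T_h α > 0` for every `α ≥ (s 0)²/2`. -/
theorem proT_strictMono_on_tail (r : ℕ) (hr : 0 < r) (s : Fin r → ℝ)
    (hpos : ∀ i, 0 < s i) (hmax : ∀ i, s i ≤ s ⟨0, hr⟩)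
    (h : ℝ) (hh : 0 < h) (hh' : h < 1 / (27 * r)) :
    StrictMonoOn (proT r hr s h) (Set.Ici ((s ⟨0, hr⟩) ^ 2 / 2)) ∧
    ∀ α : ℝ, (s ⟨0, hr⟩) ^ 2 / 2 ≤ α → 0 < deriv (proT r hr s h) α := by
  have hc : 0 < (s ⟨0, hr⟩) ^ 2 := pow_pos (hpos _) 2
  set c : ℝ := (s ⟨0, hr⟩) ^ 2 with hcdef
  have hrpos : (0 : ℝ) < r := Nat.cast_pos.2 hr
  have hhr : h * r < 1 / 27 := by
    have h1 : h * (27 * (r : ℝ)) < 1 := (lt_div_iff₀ (by positivity)).1 hh'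
    nlinarith
  -- derivative formula
  have hderiv : ∀ α : ℝ, c / 2 ≤ α → HasDerivAt (proT r hr s h)
      (2 * α * c / (α + c) ^ 3 + h * ∑ i, -(2 * (s i) ^ 4 / (α + (s i) ^ 2) ^ 3)) α := by
    intro α hα
    have hαpos : 0 < α := lt_of_lt_of_le (by positivity) hα
    have hne : ∀ i : Fin r, α + (s i) ^ 2 ≠ 0 := fun i => by positivity
    have h1 := aux1' c α (by positivity)
    have h2 : HasDerivAt (fun x : ℝ => ∑ i, (s i) ^ 4 / (x + (s i) ^ 2) ^ 2)
        (∑ i, -(2 * (s i) ^ 4 / (α + (s i) ^ 2) ^ 3)) α :=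
      HasDerivAt.fun_sum fun i _ => aux2' ((s i) ^ 4) ((s i) ^ 2) α (hne i)
    exact h1.add (h2.const_mul h)
  -- positivity of the derivative value
  have hval : ∀ α : ℝ, c / 2 ≤ α →
      0 < 2 * α * c / (α + c) ^ 3 + h * ∑ i, -(2 * (s i) ^ 4 / (α + (s i) ^ 2) ^ 3) := by
    intro α hα
    have hαpos : 0 < α := lt_of_lt_of_le (by positivity) hα
    have hden : (0 : ℝ) < (α + c) ^ 3 := by positivity
    have hS : ∑ i, (s i) ^ 4 / (α + (s i) ^ 2) ^ 3 ≤ r * (c ^ 2 / (α + c) ^ 3) := by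
      have hb : ∀ i : Fin r, (s i) ^ 4 / (α + (s i) ^ 2) ^ 3 ≤ c ^ 2 / (α + c) ^ 3 := by
        intro i
        have hd : 0 < (s i) ^ 2 := pow_pos (hpos i) 2
        have hdc : (s i) ^ 2 ≤ c := pow_le_pow_left₀ (hpos i).le (hmax i) 2
        have hca : c ≤ 2 * α := by linarith
        have key := aux3' ((s i) ^ 2) c α hd hdc hca
        have hdeni : (0 : ℝ) < (α + (s i) ^ 2) ^ 3 := by positivity
        rw [div_le_div_iff₀ hdeni hden]
        calc (s i) ^ 4 * (α + c) ^ 3 = ((s i) ^ 2) ^ 2 * (α + c) ^ 3 := by ring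
          _ ≤ c ^ 2 * (α + (s i) ^ 2) ^ 3 := key
      calc ∑ i, (s i) ^ 4 / (α + (s i) ^ 2) ^ 3
          ≤ ∑ _i : Fin r, c ^ 2 / (α + c) ^ 3 := Finset.sum_le_sum fun i _ => hb i
        _ = r * (c ^ 2 / (α + c) ^ 3) := by
            simp [Finset.sum_const, Finset.card_univ, nsmul_eq_mul]
    have hSrw : ∑ i, -(2 * (s i) ^ 4 / (α + (s i) ^ 2) ^ 3)
        = -(2 * ∑ i, (s i) ^ 4 / (α + (s i) ^ 2) ^ 3) := by
      rw [Finset.mul_sum, ← Finset.sum_neg_distrib]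
      exact Finset.sum_congr rfl fun i _ => by ring
    rw [hSrw]
    have hSnonneg : 0 ≤ ∑ i, (s i) ^ 4 / (α + (s i) ^ 2) ^ 3 :=
      Finset.sum_nonneg fun i _ => by positivity
    have hstep : h * (2 * ∑ i, (s i) ^ 4 / (α + (s i) ^ 2) ^ 3)
        ≤ h * (2 * ((r : ℝ) * (c ^ 2 / (α + c) ^ 3))) := by
      apply mul_le_mul_of_nonneg_left _ hh.le
      linarith
    have hfin : h * (2 * ((r : ℝ) * (c ^ 2 / (α + c) ^ 3))) < 2 * α * c / (α + c) ^ 3 := by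
      have heq : h * (2 * ((r : ℝ) * (c ^ 2 / (α + c) ^ 3)))
          = (2 * (h * (r : ℝ)) * c ^ 2) / (α + c) ^ 3 := by ring
      rw [heq, div_lt_div_iff₀ hden hden]
      have hkey : h * (r : ℝ) * c < α := by nlinarith
      nlinarith [mul_lt_mul_of_pos_right hkey (mul_pos hc hden)]
    nlinarith
  have hderivpos : ∀ α : ℝ, c / 2 ≤ α → 0 < deriv (proT r hr s h) α := fun α hα => by
    rw [(hderiv α hα).deriv]; exact hval α hα
  refine ⟨?_, hderivpos⟩
  apply strictMonoOn_of_deriv_pos (convex_Ici _)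
  · exact fun x hx => (hderiv x hx).continuousAt.continuousWithinAt
  · intro x hx
    rw [interior_Ici] at hx
    exact hderivpos x hx.le
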